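/- Let G be an omniconjugated graph, let W be a Kekulé state of G, and let p and q be two distinct ports of G. Then there exists a subgraph C ⊆ G that is a simple path between p and q such that (C, W) is an alternating curve. -/

import Mathlib

open scoped symmDiff

namespace Kekule

abbrev Node := ℕ
abbrev Graph := Finset (Finset Node)

/-- `G` is a graph: every edge is a 2-element set of nodes. -/
def IsGraph (G : Graph) : Prop := ∀ e ∈ G, e.card = 2

/-- The nodes of a graph: the elements of its edges. -/
def nodes (G : Graph) : Finset Node := G.biUnion id

/-- The number of edges of `G` containing `v`. -/
def deg (G : Graph) (v : Node) : ℕ := (G.filter (fun e => v ∈ e)).card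

/-- A port is a node contained in exactly one edge. -/
def ports (G : Graph) : Finset Node := (nodes G).filter (fun v => deg G v = 1)

/-- An internal node is a node that is not a port. -/
def internal (G : Graph) : Finset Node := (nodes G).filter (fun v => deg G v ≠ 1)

/-- A Kekulé state of `G`: a subgraph `W ⊆ G` such that every internal node
of `G` lies in exactly one edge of `W`. -/
def IsKekule (G W : Graph) : Prop := W ⊆ G ∧ ∀ v ∈ internal G, deg W v = 1

/-- A curve in `G`: a subgraph `C ⊆ G` such that every node of `C` that is
internal in `G` lies in exactly two edges of `C`. -/
def IsCurve (G C : Graph) : Prop :=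
  C ⊆ G ∧ ∀ v ∈ nodes C, v ∈ internal G → deg C v = 2

/-- `(C, W)` is an alternating curve in `G`: both are subgraphs of `G`,
`C` is a curve in `G`, and `W ∩ C` is a Kekulé state of `C`. -/
def IsAlternating (G C W : Graph) : Prop :=
  W ⊆ G ∧ IsCurve G C ∧ IsKekule C (W ∩ C)

/-- `W|P`: the set of ports in `P` that lie in some edge of `W`. -/
def rest (W : Graph) (P : Finset Node) : Finset Node := P ∩ nodes W

/-- The set of Kekulé port assignments of `G`. -/
def KP (G : Graph) : Set (Finset Node) :=
  {g | ∃ W, IsKekule G W ∧ rest W (ports G) = g}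

/-- A cell `K` over `P` is a Kekulé cell if it is the set of Kekulé port
assignments of some graph with port set `P`. -/
def IsKekuleCell (P : Finset Node) (K : Set (Finset Node)) : Prop :=
  ∃ G, IsGraph G ∧ ports G = P ∧ KP G = K

/-- A channel: a 2-element subset of `P`. -/
def IsChannel (P : Finset Node) (c : Finset Node) : Prop := c ⊆ P ∧ c.card = 2

/-- A port `p` is flexible for a cell `K`. -/
def Flexible (K : Set (Finset Node)) (p : Node) : Prop :=
  ∃ g ∈ K, ∃ g' ∈ K, p ∈ g ∧ p ∉ g'

/-- Hamming distance between two port assignments. -/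
def hdist (k k' : Finset Node) : ℕ := (k ∆ k').card

/-- The Hamming diameter of `K` equals `n`. -/
def HamDiamEq (K : Set (Finset Node)) (n : ℕ) : Prop :=
  (∃ k ∈ K, ∃ k' ∈ K, hdist k k' = n) ∧ ∀ k ∈ K, ∀ k' ∈ K, hdist k k' ≤ n

/-- `G` is connected: nonempty, and any two distinct nodes are joined by a walk. -/
def Connected (G : Graph) : Prop :=
  G.Nonempty ∧ ∀ p ∈ nodes G, ∀ q ∈ nodes G, p ≠ q →
    ∃ (n : ℕ) (f : ℕ → Node), f 0 = p ∧ f n = q ∧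
      ∀ i < n, ({f i, f (i + 1)} : Finset Node) ∈ G

/-- `C` is a simple path between `p` and `q`. -/
def IsSimplePath (C : Graph) (p q : Node) : Prop :=
  Connected C ∧ ports C = {p, q} ∧
    ∀ v ∈ nodes C, v ≠ p → v ≠ q → deg C v = 2

/-- A cycle: a connected graph all of whose nodes lie in exactly two edges. -/
def IsCycle (C : Graph) : Prop :=
  Connected C ∧ ∀ v ∈ nodes C, deg C v = 2

/-- A semi-Kekulé state of `G`: every internal node of `G` lies in an odd
number of edges of `W`. -/
def IsSemiKekule (G W : Graph) : Prop :=
  W ⊆ G ∧ ∀ v ∈ internal G, deg W v % 2 = 1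

/-- The signature of `G`. -/
def sig (G : Graph) : ℕ := (internal G).card % 2

/-- `G` is omniconjugated. -/
def Omniconjugated (G : Graph) : Prop :=
  2 ≤ (ports G).card ∧ KP G = {g | g ⊆ ports G ∧ g.card % 2 = sig G}

instance : Std.Commutative (α := Finset Node) (· ∆ ·) := ⟨symmDiff_comm⟩
instance : Std.Associative (α := Finset Node) (· ∆ ·) := ⟨symmDiff_assoc⟩

/-- The `⊕`-sum of a finite family of port assignments. -/
def xorSum (D : Finset (Finset Node)) : Finset Node := D.fold (· ∆ ·) ∅ id

-- auxiliary lemmas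
lemma mem_nodes_iff {G : Graph} {v : Node} : v ∈ nodes G ↔ ∃ e ∈ G, v ∈ e := by
  simp [nodes]

lemma deg_pos {G : Graph} {v : Node} (h : v ∈ nodes G) : 0 < deg G v := by
  obtain ⟨e, he, hv⟩ := mem_nodes_iff.mp h
  exact Finset.card_pos.mpr ⟨e, Finset.mem_filter.mpr ⟨he, hv⟩⟩

lemma mem_nodes_of_mem {G : Graph} {v : Node} {e : Finset Node} (he : e ∈ G) (hv : v ∈ e) :
    v ∈ nodes G := mem_nodes_iff.mpr ⟨e, he, hv⟩

lemma nodes_of_deg_pos {G : Graph} {v : Node} (h : 0 < deg G v) : v ∈ nodes G := by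
  obtain ⟨e, he⟩ := Finset.card_pos.mp h
  obtain ⟨h1, h2⟩ := Finset.mem_filter.mp he
  exact mem_nodes_of_mem h1 h2

lemma deg_mono {A B : Graph} (h : A ⊆ B) (v : Node) : deg A v ≤ deg B v :=
  Finset.card_le_card (Finset.filter_subset_filter _ h)

lemma card_symmDiff_aux {α : Type*} [DecidableEq α] (s t : Finset α) :
    (s ∆ t).card + 2 * (s ∩ t).card = s.card + t.card := by
  have hdisj : Disjoint (s ∆ t) (s ∩ t) := by
    rw [Finset.disjoint_left]
    intro a ha hb
    simp only [Finset.mem_symmDiff, Finset.mem_inter] at ha hb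
    tauto
  have hun : (s ∆ t) ∪ (s ∩ t) = s ∪ t := by
    ext a
    simp only [Finset.mem_union, Finset.mem_symmDiff, Finset.mem_inter]
    tauto
  have h1 := Finset.card_union_of_disjoint hdisj
  have h2 := Finset.card_union_add_card_inter s t
  rw [hun] at h1
  omega

lemma deg_symmDiff (A B : Graph) (v : Node) :
    deg (A ∆ B) v + 2 * deg (A ∩ B) v = deg A v + deg B v := by
  have hf1 : (A ∆ B).filter (fun e => v ∈ e)
      = A.filter (fun e => v ∈ e) ∆ B.filter (fun e => v ∈ e) := by
    ext e
    simp only [Finset.mem_filter, Finset.mem_symmDiff]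
    tauto
  have hf2 : (A ∩ B).filter (fun e => v ∈ e)
      = A.filter (fun e => v ∈ e) ∩ B.filter (fun e => v ∈ e) := by
    ext e
    simp only [Finset.mem_filter, Finset.mem_inter]
    tauto
  unfold deg
  rw [hf1, hf2]
  exact card_symmDiff_aux _ _

lemma deg_sdiff_add_deg_inter (A B : Graph) (v : Node) :
    deg (A \ B) v + deg (A ∩ B) v = deg A v := by
  have hf1 : (A \ B).filter (fun e => v ∈ e)
      = A.filter (fun e => v ∈ e) \ B.filter (fun e => v ∈ e) := by
    ext e
    simp only [Finset.mem_filter, Finset.mem_sdiff]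
    tauto
  have hf2 : (A ∩ B).filter (fun e => v ∈ e)
      = A.filter (fun e => v ∈ e) ∩ B.filter (fun e => v ∈ e) := by
    ext e
    simp only [Finset.mem_filter, Finset.mem_inter]
    tauto
  unfold deg
  rw [hf1, hf2]
  exact Finset.card_sdiff_add_card_inter _ _

lemma handshake (C : Graph) (hC : ∀ e ∈ C, e.card = 2) :
    ∑ v ∈ nodes C, deg C v = 2 * C.card := by
  unfold deg
  calc ∑ v ∈ nodes C, (C.filter (fun e => v ∈ e)).card
      = ∑ v ∈ nodes C, ∑ e ∈ C, if v ∈ e then 1 else 0 :=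
        Finset.sum_congr rfl fun v _ => Finset.card_filter _ _
    _ = ∑ e ∈ C, ∑ v ∈ nodes C, if v ∈ e then 1 else 0 := Finset.sum_comm
    _ = ∑ e ∈ C, e.card := by
        refine Finset.sum_congr rfl fun e he => ?_
        rw [← Finset.card_filter]
        congr 1
        ext v
        simp only [Finset.mem_filter]
        exact ⟨fun h => h.2, fun h => ⟨mem_nodes_of_mem he h, h⟩⟩
    _ = 2 * C.card := by
        rw [Finset.sum_congr rfl hC, Finset.sum_const, smul_eq_mul, mul_comm]

lemma rtg_walk {C : Graph} {u v : Node}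
    (h : Relation.ReflTransGen (fun a b => ({a, b} : Finset Node) ∈ C) u v) :
    ∃ (n : ℕ) (f : ℕ → Node), f 0 = u ∧ f n = v ∧
      ∀ i < n, ({f i, f (i + 1)} : Finset Node) ∈ C := by
  induction h with
  | refl => exact ⟨0, fun _ => u, rfl, rfl, by omega⟩
  | @tail b c hb hbc ih =>
    obtain ⟨n, f, hf0, hfn, hstep⟩ := ih
    refine ⟨n + 1, fun i => if i = n + 1 then c else f i, by simp [hf0], by simp, ?_⟩
    intro i hi
    by_cases hin : i = n
    · subst hin
      simp only [Nat.succ_ne_self, if_neg (by omega : i ≠ i + 1), if_pos rfl]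
      rw [hfn] at *
      simpa using hbc
    · have hi' : i < n := by omega
      simp only [if_neg (by omega : i ≠ n + 1), if_neg (by omega : i + 1 ≠ n + 1)]
      exact hstep i hi'

lemma port_edge_unique {G : Graph} {r : Node} (hr : deg G r = 1)
    {e₁ e₂ : Finset Node} (h₁ : e₁ ∈ G) (h₂ : e₂ ∈ G) (hr₁ : r ∈ e₁) (hr₂ : r ∈ e₂) :
    e₁ = e₂ := by
  have := Finset.card_le_one.mp (le_of_eq hr)
  exact this e₁ (Finset.mem_filter.mpr ⟨h₁, hr₁⟩) e₂ (Finset.mem_filter.mpr ⟨h₂, hr₂⟩)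


/-- In an omniconjugated graph, for every Kekulé state `W` and
distinct ports `p`, `q` there is a simple alternating path from `p` to `q`. -/
theorem statement15 (G : Graph) (hG : IsGraph G) (homni : Omniconjugated G)
    (W : Graph) (hW : IsKekule G W)
    (p q : Node) (hp : p ∈ ports G) (hq : q ∈ ports G) (hpq : p ≠ q) :
    ∃ C : Graph, C ⊆ G ∧ IsSimplePath C p q ∧ IsAlternating G C W := by
  classical
  have hpdeg : deg G p = 1 := (Finset.mem_filter.mp hp).2
  have hqdeg : deg G q = 1 := (Finset.mem_filter.mp hq).2
  -- Step 1: get the second Kekulé state W'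
  set g : Finset Node := rest W (ports G) with hg
  have hgKP : g ∈ KP G := ⟨W, hW, rfl⟩
  rw [homni.2] at hgKP
  set g' : Finset Node := g ∆ {p, q} with hg'
  have hpair2 : ({p, q} : Finset Node).card = 2 := Finset.card_pair hpq
  have hg'KP : g' ∈ KP G := by
    rw [homni.2]
    constructor
    · intro x hx
      rw [hg', Finset.mem_symmDiff] at hx
      rcases hx with ⟨h1, _⟩ | ⟨h1, _⟩
      · exact hgKP.1 h1
      · rcases Finset.mem_insert.mp h1 with rfl | h2
        · exact hp
        · rw [Finset.mem_singleton.mp h2]; exact hq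
    · have := card_symmDiff_aux g ({p, q} : Finset Node)
      rw [hpair2, ← hg'] at this
      have h2 := hgKP.2
      omega
  obtain ⟨W', hW', hrest'⟩ := hg'KP
  -- membership characterizations for ports
  have hWchar : ∀ r ∈ ports G, (deg W r = 1 ↔ r ∈ g) := by
    intro r hr
    have h1 : deg W r ≤ 1 := (deg_mono hW.1 r).trans (le_of_eq (Finset.mem_filter.mp hr).2)
    constructor
    · intro h
      rw [hg]
      exact Finset.mem_inter.mpr ⟨hr, nodes_of_deg_pos (by omega)⟩
    · intro h
      rw [hg] at h
      have := deg_pos (Finset.mem_inter.mp h).2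
      omega
  have hW'char : ∀ r ∈ ports G, (deg W' r = 1 ↔ r ∈ g') := by
    intro r hr
    have h1 : deg W' r ≤ 1 := (deg_mono hW'.1 r).trans (le_of_eq (Finset.mem_filter.mp hr).2)
    constructor
    · intro h
      rw [← hrest']
      exact Finset.mem_inter.mpr ⟨hr, nodes_of_deg_pos (by omega)⟩
    · intro h
      rw [← hrest'] at h
      have := deg_pos (Finset.mem_inter.mp h).2
      omega
  have hgg' : g ∆ g' = {p, q} := by rw [hg']; exact symmDiff_symmDiff_cancel_left g {p, q}
  -- the symmetric difference D
  set D : Graph := W ∆ W' with hD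
  have hDsub : D ⊆ G := by
    intro e he
    rw [hD, Finset.mem_symmDiff] at he
    rcases he with ⟨h1, _⟩ | ⟨h1, _⟩
    · exact hW.1 h1
    · exact hW'.1 h1
  -- degree of D at ports
  have hDport : ∀ r ∈ ports G, deg D r = if r ∈ ({p, q} : Finset Node) then 1 else 0 := by
    intro r hr
    have hrG : deg G r = 1 := (Finset.mem_filter.mp hr).2
    have ha : deg W r ≤ 1 := (deg_mono hW.1 r).trans (le_of_eq hrG)
    have hb : deg W' r ≤ 1 := (deg_mono hW'.1 r).trans (le_of_eq hrG)
    have hca : deg (W ∩ W') r ≤ deg W r := deg_mono Finset.inter_subset_left r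
    have hcb : deg (W ∩ W') r ≤ deg W' r := deg_mono Finset.inter_subset_right r
    have hsum := deg_symmDiff W W' r
    rw [← hD] at hsum
    have hiffa := hWchar r hr
    have hiffb := hW'char r hr
    by_cases hr2 : r ∈ ({p, q} : Finset Node)
    · have hmem : r ∈ g ∆ g' := hgg' ▸ hr2
      rw [Finset.mem_symmDiff] at hmem
      rw [if_pos hr2]
      rcases hmem with ⟨h1, h2⟩ | ⟨h1, h2⟩
      · have e1 : deg W r = 1 := hiffa.mpr h1
        have e2 : deg W' r ≠ 1 := fun h => h2 (hiffb.mp h)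
        omega
      · have e1 : deg W' r = 1 := hiffb.mpr h1
        have e2 : deg W r ≠ 1 := fun h => h2 (hiffa.mp h)
        omega
    · have hmem : r ∉ g ∆ g' := hgg' ▸ hr2
      rw [Finset.mem_symmDiff] at hmem
      push_neg at hmem
      rw [if_neg hr2]
      by_cases hrg : r ∈ g
      · have hrg' : r ∈ g' := hmem.1 hrg
        have e1 : deg W r = 1 := hiffa.mpr hrg
        have e2 : deg W' r = 1 := hiffb.mpr hrg'
        -- the unique edge of G at r lies in both W and W'
        obtain ⟨eW, heW⟩ := Finset.card_pos.mp (e1 ▸ Nat.one_pos)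
        obtain ⟨eW', heW'⟩ := Finset.card_pos.mp (e2 ▸ Nat.one_pos)
        obtain ⟨heW1, heW2⟩ := Finset.mem_filter.mp heW
        obtain ⟨heW'1, heW'2⟩ := Finset.mem_filter.mp heW'
        have heq : eW = eW' := port_edge_unique hrG (hW.1 heW1) (hW'.1 heW'1) heW2 heW'2
        have hcge : 1 ≤ deg (W ∩ W') r := by
          apply Finset.card_pos.mpr
          exact ⟨eW, Finset.mem_filter.mpr ⟨Finset.mem_inter.mpr ⟨heW1, heq ▸ heW'1⟩, heW2⟩⟩
        omega
      · have hrg' : r ∉ g' := fun h => hrg (hmem.2 h)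
        have e1 : deg W r ≠ 1 := fun h => hrg (hiffa.mp h)
        have e2 : deg W' r ≠ 1 := fun h => hrg' (hiffb.mp h)
        omega
  -- degree of D at internal nodes
  have hDint : ∀ v ∈ internal G, deg D v + 2 * deg (W ∩ W') v = 2 := by
    intro v hv
    have hsum := deg_symmDiff W W' v
    rw [← hD, hW.2 v hv, hW'.2 v hv] at hsum
    omega
  have hnodesDG : nodes D ⊆ nodes G := by
    intro v hv
    obtain ⟨e, he, hve⟩ := mem_nodes_iff.mp hv
    exact mem_nodes_of_mem (hDsub he) hve
  have hclass : ∀ v ∈ nodes G, v ∈ ports G ∨ v ∈ internal G := by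
    intro v hv
    by_cases h : deg G v = 1
    · exact Or.inl (Finset.mem_filter.mpr ⟨hv, h⟩)
    · exact Or.inr (Finset.mem_filter.mpr ⟨hv, h⟩)
  have hDnode : ∀ v ∈ nodes D,
      ((v = p ∨ v = q) ∧ deg D v = 1) ∨
      (deg D v = 2 ∧ v ∈ internal G ∧ deg (W ∩ W') v = 0) := by
    intro v hv
    have hpos := deg_pos hv
    rcases hclass v (hnodesDG hv) with hvP | hvI
    · have h := hDport v hvP
      by_cases hv2 : v ∈ ({p, q} : Finset Node)
      · rw [if_pos hv2] at h
        left
        refine ⟨?_, h⟩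
        rcases Finset.mem_insert.mp hv2 with h' | h'
        · exact Or.inl h'
        · exact Or.inr (Finset.mem_singleton.mp h')
      · rw [if_neg hv2] at h; omega
    · have h := hDint v hvI
      right
      exact ⟨by omega, hvI, by omega⟩
  -- reachability from p within D
  set Reach : Node → Prop :=
    Relation.ReflTransGen (fun a b => ({a, b} : Finset Node) ∈ D) p with hReach
  set C : Graph := D.filter (fun e => ∃ x ∈ e, Reach x) with hC
  have hCsub : C ⊆ D := Finset.filter_subset _ _
  have hCG : C ⊆ G := fun e he => hDsub (hCsub he)
  have hmemC : ∀ e ∈ D, (∃ x ∈ e, Reach x) → e ∈ C := fun e he h =>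
    Finset.mem_filter.mpr ⟨he, h⟩
  have hclose : ∀ e ∈ D, ∀ x ∈ e, Reach x → ∀ y ∈ e, Reach y := by
    intro e he x hx hrx y hy
    obtain ⟨a, b, hab, rfl⟩ := Finset.card_eq_two.mp (hG e (hDsub he))
    by_cases hxy : x = y
    · exact hxy ▸ hrx
    · have hpairxy : ({x, y} : Finset Node) = {a, b} := by
        simp only [Finset.mem_insert, Finset.mem_singleton] at hx hy
        rcases hx with rfl | rfl <;> rcases hy with rfl | rfl
        · exact absurd rfl hxy
        · rfl
        · exact Finset.pair_comm _ _
        · exact absurd rfl hxy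
      exact hrx.tail (show ({x, y} : Finset Node) ∈ D from hpairxy ▸ he)
  have hreachC : ∀ v ∈ nodes C, Reach v := by
    intro v hv
    obtain ⟨e, he, hve⟩ := mem_nodes_iff.mp hv
    obtain ⟨heD, x, hx, hrx⟩ := Finset.mem_filter.mp he
    exact hclose e heD x hx hrx v hve
  have hfilterC : ∀ v, Reach v →
      C.filter (fun e => v ∈ e) = D.filter (fun e => v ∈ e) := by
    intro v hrv
    ext e
    simp only [Finset.mem_filter, hC]
    constructor
    · rintro ⟨⟨h1, _⟩, h3⟩; exact ⟨h1, h3⟩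
    · rintro ⟨h1, h2⟩; exact ⟨⟨h1, v, h2, hrv⟩, h2⟩
  have hdegC : ∀ v, Reach v → deg C v = deg D v := by
    intro v hrv
    unfold deg
    rw [hfilterC v hrv]
  have hreachInC : ∀ v, Reach v →
      Relation.ReflTransGen (fun a b => ({a, b} : Finset Node) ∈ C) p v := by
    intro v hv
    rw [hReach] at hv
    induction hv with
    | refl => exact Relation.ReflTransGen.refl
    | @tail b c hb hbc ih =>
      exact ih.tail (hmemC _ hbc ⟨b, Finset.mem_insert_self _ _, hb⟩)
  have hdegDp : deg D p = 1 := by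
    have := hDport p hp
    rwa [if_pos (Finset.mem_insert_self _ _)] at this
  have hpC : p ∈ nodes C := by
    obtain ⟨e, he⟩ := Finset.card_pos.mp (hdegDp ▸ Nat.one_pos)
    obtain ⟨h1, h2⟩ := Finset.mem_filter.mp he
    exact mem_nodes_of_mem (hmemC e h1 ⟨p, h2, Relation.ReflTransGen.refl⟩) h2
  have hnodesCD : nodes C ⊆ nodes D := by
    intro v hv
    obtain ⟨e, he, hve⟩ := mem_nodes_iff.mp hv
    exact mem_nodes_of_mem (hCsub he) hve
  have hCdeg12 : ∀ v ∈ nodes C,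
      (deg C v = 1 ∧ (v = p ∨ v = q)) ∨
      (deg C v = 2 ∧ v ∈ internal G ∧ deg (W ∩ W') v = 0) := by
    intro v hv
    have h1 : deg C v = deg D v := hdegC v (hreachC v hv)
    rcases hDnode v (hnodesCD hv) with ⟨h2, h3⟩ | ⟨h2, h3, h4⟩
    · exact Or.inl ⟨h1.trans h3, h2⟩
    · exact Or.inr ⟨h1.trans h2, h3, h4⟩
  have hdegCp : deg C p = 1 := (hdegC p Relation.ReflTransGen.refl).trans hdegDp
  -- handshake: q is in C
  have hCgraph : ∀ e ∈ C, e.card = 2 := fun e he => hG e (hCG he)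
  have hsum := handshake C hCgraph
  set O : Finset Node := (nodes C).filter (fun v => deg C v = 1) with hO
  have hOp : p ∈ O := Finset.mem_filter.mpr ⟨hpC, hdegCp⟩
  have hOsub : ∀ v ∈ O, v = p ∨ v = q := by
    intro v hv
    obtain ⟨h1, h2⟩ := Finset.mem_filter.mp hv
    rcases hCdeg12 v h1 with ⟨_, h⟩ | ⟨h, _⟩
    · exact h
    · omega
  have hOcard : O.card % 2 = 0 := by
    have hsplit := Finset.sum_filter_add_sum_filter_not (nodes C)
      (fun v => deg C v = 1) (deg C)
    have hs1 : ∑ v ∈ (nodes C).filter (fun v => deg C v = 1), deg C v = O.card := by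
      rw [hO, Finset.card_eq_sum_ones]
      exact Finset.sum_congr rfl fun v hv => (Finset.mem_filter.mp hv).2
    have hs2 : ∑ v ∈ (nodes C).filter (fun v => ¬ deg C v = 1), deg C v
        = 2 * ((nodes C).filter (fun v => ¬ deg C v = 1)).card := by
      have hall : ∀ v ∈ (nodes C).filter (fun v => ¬ deg C v = 1), deg C v = 2 := by
        intro v hv
        obtain ⟨h1, h2⟩ := Finset.mem_filter.mp hv
        rcases hCdeg12 v h1 with ⟨h, _⟩ | ⟨h, _⟩
        · exact absurd h h2
        · exact h
      rw [Finset.sum_congr rfl hall, Finset.sum_const, smul_eq_mul, mul_comm]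
    rw [hs1, hs2] at hsplit
    omega
  have hqO : q ∈ O := by
    by_contra hqO
    have hOeq : O = {p} := by
      ext v
      simp only [Finset.mem_singleton]
      constructor
      · intro hv
        rcases hOsub v hv with h | h
        · exact h
        · exact absurd (h ▸ hv) hqO
      · rintro rfl; exact hOp
    rw [hOeq, Finset.card_singleton] at hOcard
    omega
  have hqC : q ∈ nodes C := (Finset.mem_filter.mp hqO).1
  have hdegCq : deg C q = 1 := (Finset.mem_filter.mp hqO).2
  -- ports of C
  have hportsC : ports C = {p, q} := by
    ext v
    simp only [ports, Finset.mem_filter, Finset.mem_insert, Finset.mem_singleton]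
    constructor
    · rintro ⟨hv, hd⟩
      rcases hCdeg12 v hv with ⟨_, h⟩ | ⟨h, _⟩
      · exact h
      · omega
    · rintro (rfl | rfl)
      · exact ⟨hpC, hdegCp⟩
      · exact ⟨hqC, hdegCq⟩
  -- connectivity
  have hconn : Connected C := by
    constructor
    · obtain ⟨e, he, _⟩ := mem_nodes_iff.mp hpC
      exact ⟨e, he⟩
    · intro a ha b hb hab
      have hra := hreachInC a (hreachC a ha)
      have hrb := hreachInC b (hreachC b hb)
      have hsymm : Symmetric (fun x y => ({x, y} : Finset Node) ∈ C) := by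
        intro x y h
        rwa [Finset.pair_comm]
      exact rtg_walk ((Relation.ReflTransGen.mono (fun x y h => hsymm h) _ _ hra.swap).trans hrb)
  refine ⟨C, hCG, ⟨hconn, hportsC, ?_⟩, hW.1, ⟨hCG, ?_⟩, Finset.inter_subset_right, ?_⟩
  · -- interior nodes of the path have degree 2
    intro v hv hvp hvq
    rcases hCdeg12 v hv with ⟨_, h | h⟩ | ⟨h, _⟩
    · exact absurd h hvp
    · exact absurd h hvq
    · exact h
  · -- curve condition
    intro v hv hint
    rcases hCdeg12 v hv with ⟨h1, _⟩ | ⟨h2, _⟩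
    · have := hDint v hint
      have := hdegC v (hreachC v hv)
      omega
    · exact h2
  · -- W ∩ C is a Kekulé state of C
    intro v hv
    obtain ⟨hvC, hvd⟩ := Finset.mem_filter.mp hv
    rcases hCdeg12 v hvC with ⟨h1, _⟩ | ⟨h2, hint, hc0⟩
    · exact absurd h1 hvd
    · have hrv := hreachC v hvC
      have hfil : (W ∩ C).filter (fun e => v ∈ e) = (W \ W').filter (fun e => v ∈ e) := by
        ext e
        simp only [Finset.mem_filter, Finset.mem_inter, Finset.mem_sdiff]
        constructor
        · rintro ⟨⟨heW, heC⟩, hve⟩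
          have heD : e ∈ D := hCsub heC
          rw [hD, Finset.mem_symmDiff] at heD
          rcases heD with ⟨_, h⟩ | ⟨_, h⟩
          · exact ⟨⟨heW, h⟩, hve⟩
          · exact absurd heW h
        · rintro ⟨⟨heW, heW'⟩, hve⟩
          have heD : e ∈ D := by
            rw [hD, Finset.mem_symmDiff]
            exact Or.inl ⟨heW, heW'⟩
          exact ⟨⟨heW, hmemC e heD ⟨v, hve, hrv⟩⟩, hve⟩
      have hdegeq : deg (W ∩ C) v = deg (W \ W') v := by
        unfold deg
        rw [hfil]
      have hsd := deg_sdiff_add_deg_inter W W' v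
      rw [hW.2 v hint] at hsd
      omega

end Kekule
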